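/- arXiv:2502.07454 — 3 statements merged into one kernel-verified Lean document; each statement's English description precedes it below -/
import Mathlib

section
/- The embedding graph D_γ of a nice embedding γ of candidates (the weak dual of the plane graph induced by the bisector arrangement clipped by a large circle) is a distance-preserving subgraph of the permutation graph G(S_C): for any two vertices u,v of D_γ (linear orders with nonempty regions), the graph distance between u and v in D_γ equals their swap (Kendall tau) distance. -/
noncomputable section

abbrev Plane : Type := EuclideanSpace ℝ (Fin 2)

/-- The region of a ranking `σ` of the candidates. -/
def region {C : Type*} {m : ℕ} (γ : C → Plane) (σ : C ≃ Fin m) : Set Plane :=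
  {p : Plane | ∀ a b : C, σ a < σ b → dist p (γ a) < dist p (γ b)}

/-- The swap (Kendall tau) distance between two rankings: the number of discordant pairs. -/
def kendall {C : Type*} {m : ℕ} (u v : C ≃ Fin m) : ℕ :=
  Set.ncard {p : C × C | u p.1 < u p.2 ∧ v p.2 < v p.1}

/-- The embedding graph of `γ`: vertices are the rankings with nonempty region, with an
edge between two rankings at swap distance 1 (this is exactly adjacency of regions in the
bisector arrangement). -/
def embeddingGraph {C : Type*} [Fintype C] (γ : C → Plane) :
    SimpleGraph {σ : C ≃ Fin (Fintype.card C) // (region γ σ).Nonempty} :=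
  SimpleGraph.fromRel (fun x y => kendall x.1 y.1 = 1)

namespace Stmt11

open RealInnerProductSpace MeasureTheory FiniteDimensional

variable {C : Type*} [Fintype C] {m : ℕ}

lemma kendall_def (u v : C ≃ Fin m) :
    kendall u v = Set.ncard {p : C × C | u p.1 < u p.2 ∧ v p.2 < v p.1} := rfl

lemma kendall_self (u : C ≃ Fin m) : kendall u u = 0 := by
  rw [kendall_def]
  convert Set.ncard_empty (C × C)
  ext ⟨a, b⟩
  simp only [Set.mem_setOf_eq, Set.mem_empty_iff_false, iff_false, not_and]
  exact fun h1 h2 => absurd h1 (lt_asymm h2)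

lemma kendall_comm (u v : C ≃ Fin m) : kendall u v = kendall v u := by
  rw [kendall_def, kendall_def]
  have himg : {p : C × C | v p.1 < v p.2 ∧ u p.2 < u p.1} =
      Prod.swap '' {p : C × C | u p.1 < u p.2 ∧ v p.2 < v p.1} := by
    ext ⟨a, b⟩
    constructor
    · rintro ⟨h1, h2⟩
      exact ⟨(b, a), ⟨h2, h1⟩, rfl⟩
    · rintro ⟨⟨x, y⟩, ⟨h1, h2⟩, hxy⟩
      obtain ⟨rfl, rfl⟩ : y = a ∧ x = b := by
        simpa [Prod.ext_iff] using hxy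
      exact ⟨h2, h1⟩
  rw [himg, Set.ncard_image_of_injective _ Prod.swap_injective]

lemma eq_of_kendall_eq_zero {u v : C ≃ Fin m} (h : kendall u v = 0) : u = v := by
  rw [kendall_def, Set.ncard_eq_zero (Set.toFinite _)] at h
  have hmono : ∀ a b : C, u a < u b → v a < v b := by
    intro a b hab
    have hne : v a ≠ v b := by
      intro he
      have : a = b := v.injective he
      subst this
      exact lt_irrefl _ hab
    rcases hne.lt_or_gt with h' | h'
    · exact h'
    · have hmem : ((a, b) : C × C) ∈ {p : C × C | u p.1 < u p.2 ∧ v p.2 < v p.1} := ⟨hab, h'⟩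
      rw [h] at hmem
      exact absurd hmem (Set.notMem_empty _)
  have hsm : StrictMono (⇑(u.symm.trans v)) := by
    intro i j hij
    have : u (u.symm i) < u (u.symm j) := by simpa using hij
    simpa using hmono _ _ this
  have hid : ∀ i : Fin m, (u.symm.trans v) i = i := by
    intro i
    have h1 : (StrictMono.orderIsoOfSurjective _ hsm (u.symm.trans v).surjective) i
        = (u.symm.trans v) i := rfl
    have h2 : (StrictMono.orderIsoOfSurjective _ hsm (u.symm.trans v).surjective)
        = OrderIso.refl (Fin m) := Subsingleton.elim _ _
    rw [h2] at h1
    simpa using h1.symm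
  apply Equiv.ext
  intro a
  have h3 := hid (u a)
  simp only [Equiv.trans_apply, Equiv.symm_apply_apply] at h3
  exact h3.symm

lemma kendall_triangle (u w v : C ≃ Fin m) : kendall u v ≤ kendall u w + kendall w v := by
  rw [kendall_def, kendall_def, kendall_def]
  have hsub : {p : C × C | u p.1 < u p.2 ∧ v p.2 < v p.1} ⊆
      {p : C × C | u p.1 < u p.2 ∧ w p.2 < w p.1} ∪
      {p : C × C | w p.1 < w p.2 ∧ v p.2 < v p.1} := by
    rintro ⟨a, b⟩ ⟨h1, h2⟩
    rcases lt_trichotomy (w a) (w b) with h | h | h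
    · exact Or.inr ⟨h, h2⟩
    · exact absurd (w.injective h ▸ h1) (lt_irrefl _)
    · exact Or.inl ⟨h1, h⟩
  exact le_trans (Set.ncard_le_ncard hsub (Set.toFinite _)) (Set.ncard_union_le _ _)

/-! ### Geometry -/

/-- Difference of squared distances to `γ a` and `γ b`. -/
def hfun (γ : C → Plane) (a b : C) (x : Plane) : ℝ :=
  dist x (γ a) ^ 2 - dist x (γ b) ^ 2

lemma hfun_inner (γ : C → Plane) (a b : C) (x : Plane) :
    hfun γ a b x = 2 * ⟪x, γ b⟫ - 2 * ⟪x, γ a⟫ + ‖γ a‖ ^ 2 - ‖γ b‖ ^ 2 := by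
  simp only [hfun, dist_eq_norm, @norm_sub_sq_real Plane]
  ring

lemma hfun_neg_iff (γ : C → Plane) (a b : C) (x : Plane) :
    hfun γ a b x < 0 ↔ dist x (γ a) < dist x (γ b) := by
  rw [hfun, sub_neg]
  constructor
  · intro h
    by_contra h'
    push_neg at h'
    exact absurd (pow_le_pow_left₀ dist_nonneg h' 2) (not_le.mpr h)
  · intro h
    have := pow_lt_pow_left₀ h dist_nonneg (n := 2) (by norm_num)
    exact this

lemma hfun_swap (γ : C → Plane) (a b : C) (x : Plane) :
    hfun γ a b x = - hfun γ b a x := by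
  simp only [hfun]; ring

lemma hfun_tele (γ : C → Plane) (a b c : C) (x : Plane) :
    hfun γ a b x = hfun γ a c x + hfun γ c b x := by
  simp only [hfun]; ring

lemma hfun_affine (γ : C → Plane) (a b : C) (p q : Plane) (t : ℝ) :
    hfun γ a b (p + t • (q - p)) = (1 - t) * hfun γ a b p + t * hfun γ a b q := by
  simp only [hfun_inner, inner_add_left, real_inner_smul_left, inner_sub_left]
  ring

lemma region_isOpen (γ : C → Plane) (σ : C ≃ Fin m) : IsOpen (region γ σ) := by
  have hrw : region γ σ =
      ⋂ (a : C), ⋂ (b : C), {p : Plane | σ a < σ b → dist p (γ a) < dist p (γ b)} := by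
    ext x
    simp [region, Set.mem_iInter]
  rw [hrw]
  refine isOpen_iInter_of_finite fun a => isOpen_iInter_of_finite fun b => ?_
  by_cases h : σ a < σ b
  · have : {p : Plane | σ a < σ b → dist p (γ a) < dist p (γ b)} =
        {p : Plane | dist p (γ a) < dist p (γ b)} := by
      ext x; simp [h]
    rw [this]
    exact isOpen_lt (Continuous.dist continuous_id continuous_const)
      (Continuous.dist continuous_id continuous_const)
  · have : {p : Plane | σ a < σ b → dist p (γ a) < dist p (γ b)} = Set.univ := by
      ext x; simp [h]
    rw [this]
    exact isOpen_univ

lemma zset_subsingleton (γ : C → Plane) (hγ : Function.Injective γ)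
    (hnopar : ∀ a b c d : C, a ≠ b → c ≠ d → ({a, b} : Set C) ≠ ({c, d} : Set C) →
      ∀ r : ℝ, γ c - γ d ≠ r • (γ a - γ b))
    {a b c d : C} (hab : a ≠ b) (hcd : c ≠ d)
    (hset : ({a, b} : Set C) ≠ ({c, d} : Set C)) :
    {z : Plane | hfun γ a b z = 0 ∧ hfun γ c d z = 0}.Subsingleton := by
  intro x hx y hy
  by_contra hxy
  have hw : x - y ≠ 0 := sub_ne_zero.mpr hxy
  have horth : ∀ a1 b1 : C, hfun γ a1 b1 x = 0 → hfun γ a1 b1 y = 0 →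
      ⟪x - y, γ b1 - γ a1⟫ = 0 := by
    intro a1 b1 h1 h2
    have e1 : hfun γ a1 b1 x - hfun γ a1 b1 y = 0 := by rw [h1, h2]; ring
    rw [hfun_inner, hfun_inner] at e1
    simp only [inner_sub_left, inner_sub_right]
    linarith
  have h1 := horth a b hx.1 hy.1
  have h2 := horth c d hx.2 hy.2
  set K := (ℝ ∙ (x - y))ᗮ with hK
  have hba : γ b - γ a ∈ K :=
    Submodule.mem_orthogonal_singleton_iff_inner_right.mpr h1
  have hdc : γ d - γ c ∈ K :=
    Submodule.mem_orthogonal_singleton_iff_inner_right.mpr h2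
  have hba0 : γ b - γ a ≠ 0 := sub_ne_zero.mpr fun h => hab (hγ h.symm)
  have hplane : Module.finrank ℝ Plane = 2 := finrank_euclideanSpace_fin
  have hrk : Module.finrank ℝ K = 1 := by
    have hfr := Submodule.finrank_add_finrank_orthogonal (𝕜 := ℝ) (ℝ ∙ (x - y))
    rw [finrank_span_singleton hw, hplane] at hfr
    rw [hK]
    omega
  have hspan : (ℝ ∙ (γ b - γ a)) = K := by
    apply Submodule.eq_of_le_of_finrank_le
      ((Submodule.span_singleton_le_iff_mem _ _).mpr hba)
    rw [hrk, finrank_span_singleton hba0]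
  have hmem : γ d - γ c ∈ (ℝ ∙ (γ b - γ a)) := hspan ▸ hdc
  obtain ⟨r, hr⟩ := Submodule.mem_span_singleton.mp hmem
  exact hnopar b a d c hab.symm hcd.symm
    (by rwa [Set.pair_comm b a, Set.pair_comm d c]) r hr.symm

lemma exists_generic (γ : C → Plane) (hγ : Function.Injective γ)
    (hnopar : ∀ a b c d : C, a ≠ b → c ≠ d → ({a, b} : Set C) ≠ ({c, d} : Set C) →
      ∀ r : ℝ, γ c - γ d ≠ r • (γ a - γ b))
    (p : Plane) (hp : ∀ a b : C, a ≠ b → hfun γ a b p ≠ 0)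
    (v : C ≃ Fin m) (hv : (region γ v).Nonempty) :
    ∃ q ∈ region γ v, ∀ a b c d : C, a ≠ b → c ≠ d →
      ({a, b} : Set C) ≠ ({c, d} : Set C) → ∀ t : ℝ,
      ¬ (hfun γ a b (p + t • (q - p)) = 0 ∧ hfun γ c d (p + t • (q - p)) = 0) := by
  classical
  set Z : C × C × C × C → Set Plane := fun x =>
    {z | x.1 ≠ x.2.1 ∧ x.2.2.1 ≠ x.2.2.2 ∧
      ({x.1, x.2.1} : Set C) ≠ ({x.2.2.1, x.2.2.2} : Set C) ∧
      hfun γ x.1 x.2.1 z = 0 ∧ hfun γ x.2.2.1 x.2.2.2 z = 0} with hZ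
  have hZsub : ∀ x, (Z x).Subsingleton := by
    rintro ⟨a, b, c, d⟩ z1 hz1 z2 hz2
    exact zset_subsingleton γ hγ hnopar hz1.1 hz1.2.1 hz1.2.2.1
      ⟨hz1.2.2.2.1, hz1.2.2.2.2⟩ ⟨hz2.2.2.2.1, hz2.2.2.2.2⟩
  set Bad : Set Plane := ⋃ x, ⋃ z ∈ Z x, (affineSpan ℝ ({p, z} : Set Plane) : Set Plane)
    with hBadDef
  have hline : ∀ z : Plane,
      volume ((affineSpan ℝ ({p, z} : Set Plane) : Set Plane)) = 0 := by
    intro z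
    apply Measure.addHaar_affineSubspace
    intro htop
    have hd : (affineSpan ℝ ({p, z} : Set Plane)).direction = ℝ ∙ (p -ᵥ z) := by
      rw [direction_affineSpan, vectorSpan_pair]
    have h1 : Module.finrank ℝ (affineSpan ℝ ({p, z} : Set Plane)).direction ≤ 1 := by
      rw [hd]
      rcases eq_or_ne (p -ᵥ z) 0 with h | h
      · rw [h, Submodule.span_zero_singleton]
        simp
      · rw [finrank_span_singleton h]
    rw [htop, AffineSubspace.direction_top] at h1
    rw [finrank_top] at h1
    have hplane : Module.finrank ℝ Plane = 2 := finrank_euclideanSpace_fin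
    omega
  have hBad : volume Bad = 0 := by
    rw [hBadDef]
    refine measure_iUnion_null fun x => ?_
    exact (measure_biUnion_null_iff (hZsub x).countable).mpr fun z _ => hline z
  have hopen : IsOpen (region γ v) := region_isOpen γ v
  have hpos : 0 < volume (region γ v) := hopen.measure_pos volume hv
  have hnsub : ¬ region γ v ⊆ Bad := by
    intro h
    have := measure_mono (μ := volume) h
    rw [hBad] at this
    exact absurd (le_antisymm this zero_le) hpos.ne'
  obtain ⟨q, hq, hqB⟩ := Set.not_subset.mp hnsub
  refine ⟨q, hq, ?_⟩
  rintro a b c d hab hcd hsets t ⟨h1, h2⟩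
  set z := p + t • (q - p) with hz
  have hzZ : z ∈ Z (a, b, c, d) := ⟨hab, hcd, hsets, h1, h2⟩
  have ht0 : t ≠ 0 := by
    intro h
    apply hp a b hab
    rw [h, zero_smul, add_zero] at hz
    rwa [hz] at h1
  have hzp : z - p = t • (q - p) := by rw [hz]; abel
  have hqe : q = t⁻¹ • (z -ᵥ p) +ᵥ p := by
    rw [vsub_eq_sub, hzp, smul_smul, inv_mul_cancel₀ ht0, one_smul, vadd_eq_add]
    abel
  have hpmem : p ∈ affineSpan ℝ ({p, z} : Set Plane) :=
    subset_affineSpan ℝ _ (Set.mem_insert _ _)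
  have hzmem : z ∈ affineSpan ℝ ({p, z} : Set Plane) :=
    subset_affineSpan ℝ _ (Set.mem_insert_of_mem _ rfl)
  have hq_mem : q ∈ (affineSpan ℝ ({p, z} : Set Plane) : Set Plane) := by
    rw [hqe]
    exact AffineSubspace.smul_vsub_vadd_mem _ _ hzmem hpmem hpmem
  exact hqB (Set.mem_iUnion.mpr ⟨(a, b, c, d), Set.mem_biUnion hzZ hq_mem⟩)

lemma ncard_diff_singleton_add_one' {α : Type*} {s : Set α} {a : α} (h : a ∈ s)
    (hs : s.Finite) : (s \ {a}).ncard + 1 = s.ncard := by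
  have h1 : insert a (s \ {a}) = s := by
    rw [Set.insert_diff_singleton, Set.insert_eq_of_mem h]
  calc (s \ {a}).ncard + 1
      = (insert a (s \ {a})).ncard :=
        (Set.ncard_insert_of_notMem (by simp) (hs.diff (t := {a}))).symm
    _ = s.ncard := by rw [h1]

lemma step (γ : C → Plane) (hγ : Function.Injective γ)
    (hnopar : ∀ a b c d : C, a ≠ b → c ≠ d → ({a, b} : Set C) ≠ ({c, d} : Set C) →
      ∀ r : ℝ, γ c - γ d ≠ r • (γ a - γ b))
    (u v : C ≃ Fin m) (hu : (region γ u).Nonempty) (hv : (region γ v).Nonempty)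
    (hne : u ≠ v) :
    ∃ w : C ≃ Fin m, (region γ w).Nonempty ∧ kendall u w = 1 ∧
      kendall w v + 1 = kendall u v := by
  classical
  obtain ⟨p, hp⟩ := hu
  have hpneg : ∀ a b : C, u a < u b → hfun γ a b p < 0 := fun a b h =>
    (hfun_neg_iff γ a b p).mpr (hp a b h)
  have hpbis : ∀ a b : C, a ≠ b → hfun γ a b p ≠ 0 := by
    intro a b hab
    have hne' : u a ≠ u b := fun h => hab (u.injective h)
    rcases hne'.lt_or_gt with h | h
    · exact ne_of_lt (hpneg a b h)
    · intro h0
      rw [hfun_swap γ a b p, neg_eq_zero] at h0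
      exact absurd h0 (ne_of_lt (hpneg b a h))
  obtain ⟨q, hqreg, hgen⟩ := exists_generic γ hγ hnopar p hpbis v hv
  have hqneg : ∀ a b : C, v a < v b → hfun γ a b q < 0 := fun a b h =>
    (hfun_neg_iff γ a b q).mpr (hqreg a b h)
  set Lseg : ℝ → Plane := fun t => p + t • (q - p) with hLseg
  have haff : ∀ (a b : C) (t : ℝ),
      hfun γ a b (Lseg t) = (1 - t) * hfun γ a b p + t * hfun γ a b q :=
    fun a b t => hfun_affine γ a b p q t
  set D : Finset (C × C) :=
    Finset.univ.filter (fun pr => u pr.1 < u pr.2 ∧ v pr.2 < v pr.1) with hDdef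
  have hDset : {pr : C × C | u pr.1 < u pr.2 ∧ v pr.2 < v pr.1} = ↑D := by
    ext pr; simp [hDdef]
  have hkD : kendall u v = D.card := by
    rw [kendall_def, hDset, Set.ncard_coe_finset]
  have hDne : D.Nonempty := by
    rw [← Finset.card_pos, ← hkD]
    rcases Nat.eq_zero_or_pos (kendall u v) with h | h
    · exact absurd (eq_of_kendall_eq_zero h) hne
    · exact h
  have hDmem : ∀ pr : C × C, pr ∈ D ↔ u pr.1 < u pr.2 ∧ v pr.2 < v pr.1 := by
    intro pr; simp [hDdef]
  set τ : C × C → ℝ := fun pr =>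
    -(hfun γ pr.1 pr.2 p) / (hfun γ pr.1 pr.2 q - hfun γ pr.1 pr.2 p) with hτ
  have hDfacts : ∀ pr ∈ D, hfun γ pr.1 pr.2 p < 0 ∧ 0 < hfun γ pr.1 pr.2 q := by
    intro pr hpr
    rw [hDmem] at hpr
    refine ⟨hpneg _ _ hpr.1, ?_⟩
    have hs := hfun_swap γ pr.1 pr.2 q
    have := hqneg pr.2 pr.1 hpr.2
    linarith
  have hform : ∀ pr ∈ D, ∀ t : ℝ, hfun γ pr.1 pr.2 (Lseg t)
      = (hfun γ pr.1 pr.2 q - hfun γ pr.1 pr.2 p) * (t - τ pr) := by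
    intro pr hpr t
    obtain ⟨h1, h2⟩ := hDfacts pr hpr
    have hden : hfun γ pr.1 pr.2 q - hfun γ pr.1 pr.2 p ≠ 0 := by linarith
    rw [haff]
    simp only [hτ]
    field_simp
    ring
  have hτ01 : ∀ pr ∈ D, 0 < τ pr ∧ τ pr < 1 := by
    intro pr hpr
    obtain ⟨h1, h2⟩ := hDfacts pr hpr
    simp only [hτ]
    constructor
    · apply div_pos (by linarith) (by linarith)
    · rw [div_lt_one (by linarith)]; linarith
  obtain ⟨⟨a, b⟩, habD, hmin⟩ := D.exists_min_image τ hDne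
  have huv_ab := (hDmem (a, b)).mp habD
  have uab : u a < u b := huv_ab.1
  have vba : v b < v a := huv_ab.2
  have hab : a ≠ b := fun h => absurd (h ▸ uab) (lt_irrefl _)
  have hpair_ne_sets : ∀ c d : C, u c < u d → (c, d) ≠ (a, b) →
      ({c, d} : Set C) ≠ ({a, b} : Set C) := by
    intro c d hcd hne' hseteq
    have hc : c = a ∨ c = b := by
      have : c ∈ ({a, b} : Set C) := hseteq ▸ Set.mem_insert c {d}
      simpa using this
    have hd : d = a ∨ d = b := by
      have : d ∈ ({a, b} : Set C) := hseteq ▸ Set.mem_insert_of_mem c rfl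
      simpa using this
    rcases hc with rfl | rfl <;> rcases hd with rfl | rfl
    · exact absurd hcd (lt_irrefl _)
    · exact hne' rfl
    · exact absurd uab (lt_asymm hcd)
    · exact absurd hcd (lt_irrefl _)
  have hz_ab : hfun γ a b (Lseg (τ (a, b))) = 0 := by
    rw [hform (a, b) habD]; ring
  have huniq : ∀ pr ∈ D, pr ≠ (a, b) → τ (a, b) < τ pr := by
    intro pr hpr hne'
    rcases lt_or_eq_of_le (hmin pr hpr) with h | h
    · exact h
    · exfalso
      obtain ⟨c, d⟩ := pr
      have hcd' := (hDmem (c, d)).mp hpr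
      have hz2 : hfun γ c d (Lseg (τ (a, b))) = 0 := by
        rw [hform (c, d) hpr, h]; ring
      have hcne : c ≠ d := fun h' => absurd (h' ▸ hcd'.1) (lt_irrefl _)
      refine hgen c d a b hcne hab (hpair_ne_sets c d hcd'.1 hne') (τ (a, b)) ⟨?_, ?_⟩
      · exact hz2
      · exact hz_ab
  have hneg : ∀ (c d : C), u c < u d → (c, d) ≠ (a, b) → ∀ t : ℝ, 0 < t → t < 1 →
      ((c, d) ∈ D → t < τ (c, d)) → hfun γ c d (Lseg t) < 0 := by
    intro c d hcd hne' t ht0 ht1 hlt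
    by_cases hmem : (c, d) ∈ D
    · have hf := hform (c, d) hmem t
      obtain ⟨h1, h2⟩ := hDfacts (c, d) hmem
      have := hlt hmem
      rw [hf]
      have hBpos : (0 : ℝ) < hfun γ c d q - hfun γ c d p := by
        simpa using sub_pos.mpr (lt_trans h1 h2)
      nlinarith
    · have hcdne : c ≠ d := fun h' => absurd (h' ▸ hcd) (lt_irrefl _)
      have hvcd : v c < v d := by
        have hne'' : v c ≠ v d := fun h' => hcdne (v.injective h')
        rcases hne''.lt_or_gt with h' | h'
        · exact h'
        · exact absurd ((hDmem (c, d)).mpr ⟨hcd, h'⟩) hmem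
      have h1 : hfun γ c d p < 0 := hpneg c d hcd
      have h2 : hfun γ c d q < 0 := hqneg c d hvcd
      rw [haff]
      nlinarith
  have hadjacent : ∀ c : C, ¬ (u a < u c ∧ u c < u b) := by
    rintro c ⟨h1, h2⟩
    have hca : c ≠ a := fun h => absurd (h ▸ h1) (lt_irrefl _)
    have hcb : c ≠ b := fun h => absurd (h ▸ h2) (lt_irrefl _)
    have ht01 := hτ01 (a, b) habD
    have hn1 : hfun γ a c (Lseg (τ (a, b))) < 0 :=
      hneg a c h1 (fun h => hcb (congrArg Prod.snd h)) (τ (a, b)) ht01.1 ht01.2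
        (fun hm => huniq (a, c) hm (fun h => hcb (congrArg Prod.snd h)))
    have hn2 : hfun γ c b (Lseg (τ (a, b))) < 0 :=
      hneg c b h2 (fun h => hca (congrArg Prod.fst h)) (τ (a, b)) ht01.1 ht01.2
        (fun hm => huniq (c, b) hm (fun h => hca (congrArg Prod.fst h)))
    have htele := hfun_tele γ a b c (Lseg (τ (a, b)))
    linarith [hz_ab]
  -- choose t₁ strictly between the first crossing time and all later ones
  set F : Finset ℝ := insert (1 : ℝ) ((D.erase (a, b)).image τ) with hF
  have hFne : F.Nonempty := ⟨1, Finset.mem_insert_self _ _⟩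
  set T := F.min' hFne with hT
  have hTgt : τ (a, b) < T := by
    rw [hT, Finset.lt_min'_iff]
    intro y hy
    rw [hF, Finset.mem_insert] at hy
    rcases hy with rfl | hy
    · exact (hτ01 (a, b) habD).2
    · obtain ⟨pr, hpr, rfl⟩ := Finset.mem_image.mp hy
      exact huniq pr (Finset.mem_of_mem_erase hpr) (Finset.ne_of_mem_erase hpr)
  have hT1 : T ≤ 1 := Finset.min'_le _ _ (Finset.mem_insert_self _ _)
  set t₁ := (τ (a, b) + T) / 2 with ht₁def
  have ht₁a : τ (a, b) < t₁ := by rw [ht₁def]; linarith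
  have ht₁b : t₁ < T := by rw [ht₁def]; linarith
  have ht₁0 : 0 < t₁ := lt_trans (hτ01 (a, b) habD).1 ht₁a
  have ht₁1 : t₁ < 1 := lt_of_lt_of_le ht₁b hT1
  have hposab : 0 < hfun γ a b (Lseg t₁) := by
    rw [hform (a, b) habD]
    obtain ⟨h1, h2⟩ := hDfacts (a, b) habD
    have hBpos : (0 : ℝ) < hfun γ a b q - hfun γ a b p := by
      simpa using sub_pos.mpr (lt_trans h1 h2)
    nlinarith
  have hneg1 : ∀ c d : C, u c < u d → (c, d) ≠ (a, b) → hfun γ c d (Lseg t₁) < 0 := by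
    intro c d hcd hne'
    refine hneg c d hcd hne' t₁ ht₁0 ht₁1 fun hm => ?_
    have hmF : τ (c, d) ∈ F := by
      rw [hF]
      exact Finset.mem_insert_of_mem
        (Finset.mem_image_of_mem τ (Finset.mem_erase.mpr ⟨hne', hm⟩))
    exact lt_of_lt_of_le ht₁b (Finset.min'_le _ _ hmF)
  set w := (Equiv.swap a b).trans u with hw
  have hwa : w a = u b := by simp [hw]
  have hwb : w b = u a := by simp [hw]
  have hwx : ∀ x : C, a ≠ x → b ≠ x → w x = u x := by
    intro x hxa hxb
    simp [hw, Equiv.swap_apply_of_ne_of_ne hxa.symm hxb.symm]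
  have hreg : Lseg t₁ ∈ region γ w := by
    intro x y hxy
    rw [← hfun_neg_iff]
    rcases eq_or_ne a x with rfl | hxa
    · rcases eq_or_ne b y with rfl | hyb
      · rw [hwa, hwb] at hxy
        exact absurd uab (lt_asymm hxy)
      · rcases eq_or_ne a y with rfl | hya
        · exact absurd hxy (lt_irrefl _)
        · rw [hwa, hwx y hya hyb] at hxy
          exact hneg1 a y (lt_trans uab hxy) (fun h => hyb (congrArg Prod.snd h).symm)
    · rcases eq_or_ne b x with rfl | hxb
      · rcases eq_or_ne a y with rfl | hya
        · rw [hfun_swap]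
          linarith [hposab]
        · rcases eq_or_ne b y with rfl | hyb
          · exact absurd hxy (lt_irrefl _)
          · rw [hwb, hwx y hya hyb] at hxy
            have huby : u b < u y := by
              rcases lt_trichotomy (u b) (u y) with h | h | h
              · exact h
              · exact absurd (u.injective h) hyb
              · exact absurd ⟨hxy, h⟩ (hadjacent y)
            exact hneg1 b y huby (fun h => hab (congrArg Prod.fst h).symm)
      · rcases eq_or_ne a y with rfl | hya
        · rw [hwx x hxa hxb, hwa] at hxy
          have huxa : u x < u a := by
            rcases lt_trichotomy (u x) (u a) with h | h | h
            · exact h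
            · exact absurd (u.injective h).symm hxa
            · exact absurd ⟨h, hxy⟩ (hadjacent x)
          exact hneg1 x a huxa (fun h => hab (congrArg Prod.snd h))
        · rcases eq_or_ne b y with rfl | hyb
          · rw [hwx x hxa hxb, hwb] at hxy
            exact hneg1 x b (lt_trans hxy uab) (fun h => hxa (congrArg Prod.fst h).symm)
          · rw [hwx x hxa hxb, hwx y hya hyb] at hxy
            exact hneg1 x y hxy (fun h => hxa (congrArg Prod.fst h).symm)
  have hdisc_uw : {pr : C × C | u pr.1 < u pr.2 ∧ w pr.2 < w pr.1} = {(a, b)} := by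
    ext ⟨x, y⟩
    simp only [Set.mem_setOf_eq, Set.mem_singleton_iff, Prod.mk.injEq]
    constructor
    · rintro ⟨h1, h2⟩
      by_contra hcon
      rcases eq_or_ne a x with rfl | hxa
      · rcases eq_or_ne b y with rfl | hyb
        · exact hcon ⟨rfl, rfl⟩
        · rcases eq_or_ne a y with rfl | hya
          · exact absurd h1 (lt_irrefl _)
          · rw [hwx y hya hyb, hwa] at h2
            exact hadjacent y ⟨h1, h2⟩
      · rcases eq_or_ne b x with rfl | hxb
        · rcases eq_or_ne a y with rfl | hya
          · rw [hwa, hwb] at h2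
            exact absurd uab (lt_asymm h2)
          · rcases eq_or_ne b y with rfl | hyb
            · exact absurd h1 (lt_irrefl _)
            · rw [hwx y hya hyb, hwb] at h2
              exact absurd (lt_trans h2 uab) (lt_asymm h1)
        · rcases eq_or_ne a y with rfl | hya
          · rw [hwa, hwx x hxa hxb] at h2
            exact absurd (lt_trans uab h2) (lt_asymm h1)
          · rcases eq_or_ne b y with rfl | hyb
            · rw [hwb, hwx x hxa hxb] at h2
              exact hadjacent x ⟨h2, h1⟩
            · rw [hwx x hxa hxb, hwx y hya hyb] at h2
              exact absurd h1 (lt_asymm h2)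
    · rintro ⟨rfl, rfl⟩
      rw [hwa, hwb]
      exact ⟨uab, uab⟩
  have hk_uw : kendall u w = 1 := by
    rw [kendall_def, hdisc_uw, Set.ncard_singleton]
  have hdisc_wv : {pr : C × C | w pr.1 < w pr.2 ∧ v pr.2 < v pr.1}
      = {pr : C × C | u pr.1 < u pr.2 ∧ v pr.2 < v pr.1} \ {(a, b)} := by
    ext ⟨x, y⟩
    simp only [Set.mem_setOf_eq, Set.mem_diff, Set.mem_singleton_iff, Prod.mk.injEq]
    constructor
    · rintro ⟨h1, h2⟩
      rcases eq_or_ne a x with rfl | hxa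
      · rcases eq_or_ne b y with rfl | hyb
        · rw [hwa, hwb] at h1
          exact absurd uab (lt_asymm h1)
        · rcases eq_or_ne a y with rfl | hya
          · exact absurd h1 (lt_irrefl _)
          · rw [hwa, hwx y hya hyb] at h1
            exact ⟨⟨lt_trans uab h1, h2⟩, fun h => hyb h.2.symm⟩
      · rcases eq_or_ne b x with rfl | hxb
        · rcases eq_or_ne a y with rfl | hya
          · exact absurd vba (lt_asymm h2)
          · rcases eq_or_ne b y with rfl | hyb
            · exact absurd h1 (lt_irrefl _)
            · rw [hwb, hwx y hya hyb] at h1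
              have huby : u b < u y := by
                rcases lt_trichotomy (u b) (u y) with h | h | h
                · exact h
                · exact absurd (u.injective h) hyb
                · exact absurd ⟨h1, h⟩ (hadjacent y)
              exact ⟨⟨huby, h2⟩, fun h => hab h.1.symm⟩
        · rcases eq_or_ne a y with rfl | hya
          · rw [hwx x hxa hxb, hwa] at h1
            have huxa : u x < u a := by
              rcases lt_trichotomy (u x) (u a) with h | h | h
              · exact h
              · exact absurd (u.injective h).symm hxa
              · exact absurd ⟨h, h1⟩ (hadjacent x)
            exact ⟨⟨huxa, h2⟩, fun h => hxa h.1.symm⟩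
          · rcases eq_or_ne b y with rfl | hyb
            · rw [hwx x hxa hxb, hwb] at h1
              exact ⟨⟨lt_trans h1 uab, h2⟩, fun h => hxa h.1.symm⟩
            · rw [hwx x hxa hxb, hwx y hya hyb] at h1
              exact ⟨⟨h1, h2⟩, fun h => hxa h.1.symm⟩
    · rintro ⟨⟨h1, h2⟩, hne'⟩
      refine ⟨?_, h2⟩
      rcases eq_or_ne a x with rfl | hxa
      · rcases eq_or_ne b y with rfl | hyb
        · exact absurd ⟨rfl, rfl⟩ hne'
        · rcases eq_or_ne a y with rfl | hya
          · exact absurd h1 (lt_irrefl _)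
          · rw [hwa, hwx y hya hyb]
            rcases lt_trichotomy (u b) (u y) with h | h | h
            · exact h
            · exact absurd (u.injective h) hyb
            · exact absurd ⟨h1, h⟩ (hadjacent y)
      · rcases eq_or_ne b x with rfl | hxb
        · rcases eq_or_ne a y with rfl | hya
          · exact absurd h1 (lt_asymm uab)
          · rcases eq_or_ne b y with rfl | hyb
            · exact absurd h1 (lt_irrefl _)
            · rw [hwb, hwx y hya hyb]
              exact lt_trans uab h1
        · rcases eq_or_ne a y with rfl | hya
          · rw [hwx x hxa hxb, hwa]
            exact lt_trans h1 uab
          · rcases eq_or_ne b y with rfl | hyb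
            · rw [hwx x hxa hxb, hwb]
              rcases lt_trichotomy (u x) (u a) with h | h | h
              · exact h
              · exact absurd (u.injective h).symm hxa
              · exact absurd ⟨h, h1⟩ (hadjacent x)
            · rw [hwx x hxa hxb, hwx y hya hyb]
              exact h1
  have habmem : ((a, b) : C × C) ∈ {pr : C × C | u pr.1 < u pr.2 ∧ v pr.2 < v pr.1} :=
    ⟨uab, vba⟩
  have hk_wv : kendall w v + 1 = kendall u v := by
    rw [kendall_def, kendall_def, hdisc_wv]
    exact ncard_diff_singleton_add_one' habmem (Set.toFinite _)
  exact ⟨w, ⟨Lseg t₁, hreg⟩, hk_uw, hk_wv⟩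

lemma kendall_le_length (γ : C → Plane) :
    ∀ (x y : {σ : C ≃ Fin (Fintype.card C) // (region γ σ).Nonempty})
      (W : (embeddingGraph γ).Walk x y), kendall x.1 y.1 ≤ W.length := by
  intro x y W
  induction W with
  | nil => simp [kendall_self]
  | @cons x' y' z' h W ih =>
    have h2 := h
    simp only [embeddingGraph, SimpleGraph.fromRel_adj] at h2
    have hk : kendall x'.1 y'.1 = 1 := by
      rcases h2.2 with h1 | h1
      · exact h1
      · rw [kendall_comm]; exact h1
    have htri := kendall_triangle x'.1 y'.1 z'.1
    rw [SimpleGraph.Walk.length_cons]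
    omega

lemma exists_walk (γ : C → Plane) (hγ : Function.Injective γ)
    (hnopar : ∀ a b c d : C, a ≠ b → c ≠ d → ({a, b} : Set C) ≠ ({c, d} : Set C) →
      ∀ r : ℝ, γ c - γ d ≠ r • (γ a - γ b)) :
    ∀ (k : ℕ) (x y : {σ : C ≃ Fin (Fintype.card C) // (region γ σ).Nonempty}),
      kendall x.1 y.1 = k → ∃ W : (embeddingGraph γ).Walk x y, W.length = k := by
  intro k
  induction k with
  | zero =>
    intro x y hk
    have hxy : x = y := Subtype.ext (eq_of_kendall_eq_zero hk)
    subst hxy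
    exact ⟨SimpleGraph.Walk.nil, rfl⟩
  | succ n ih =>
    intro x y hk
    have hne : x.1 ≠ y.1 := by
      intro h
      rw [h, kendall_self] at hk
      exact absurd hk.symm (Nat.succ_ne_zero n)
    obtain ⟨w, hwne, h1, h2⟩ := step γ hγ hnopar x.1 y.1 x.2 y.2 hne
    have hkw : kendall w y.1 = n := by omega
    obtain ⟨W, hW⟩ := ih ⟨w, hwne⟩ y hkw
    have hadj : (embeddingGraph γ).Adj x ⟨w, hwne⟩ := by
      rw [embeddingGraph, SimpleGraph.fromRel_adj]
      refine ⟨?_, Or.inl h1⟩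
      intro hxy
      have hx1 : x.1 = w := congrArg Subtype.val hxy
      rw [hx1, kendall_self] at h1
      exact absurd h1.symm one_ne_zero
    exact ⟨SimpleGraph.Walk.cons hadj W, by simp [hW]⟩

end Stmt11

/-- for a nice embedding of candidates (no two bisectors parallel), the
embedding graph is a distance-preserving subgraph of the permutation graph: the graph
distance between any two of its vertices equals their swap distance. -/
theorem stmt_11 {C : Type*} [Fintype C] (γ : C → Plane) (hγ : Function.Injective γ)
    (hnopar : ∀ a b c d : C, a ≠ b → c ≠ d → ({a, b} : Set C) ≠ ({c, d} : Set C) →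
      ∀ r : ℝ, γ c - γ d ≠ r • (γ a - γ b))
    (u v : {σ : C ≃ Fin (Fintype.card C) // (region γ σ).Nonempty}) :
    (embeddingGraph γ).dist u v = kendall u.1 v.1 := by
  classical
  obtain ⟨W, hW⟩ := Stmt11.exists_walk γ hγ hnopar (kendall u.1 v.1) u v rfl
  refine le_antisymm ((SimpleGraph.dist_le W).trans (le_of_eq hW)) ?_
  obtain ⟨P, hP⟩ := SimpleGraph.Reachable.exists_walk_length_eq_dist ⟨W⟩
  rw [← hP]
  exact Stmt11.kendall_le_length γ u v P
end
end

section
/- Let γ : C → ℝ² be an injective embedding of a finite candidate set. For every candidate c ∈ C, there exists a linear order v on C ranking c first such that the region R_γ(v) is nonempty. -/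
noncomputable section

open scoped RealInnerProductSpace

lemma sq_dist_line (p x : Plane) (v : Plane) (t : ℝ) :
    dist (p + t • v) x ^ 2 = dist p x ^ 2 + 2 * t * ⟪p - x, v⟫ + t ^ 2 * ‖v‖ ^ 2 := by
  rw [dist_eq_norm, dist_eq_norm]
  have h : p + t • v - x = (p - x) + t • v := by abel
  rw [h, norm_add_sq_real, real_inner_smul_right, norm_smul]
  simp [mul_pow]
  ring

lemma dense_ne_bisector (x y : Plane) (hxy : x ≠ y) :
    Dense {p : Plane | dist p x ≠ dist p y} := by
  rw [Metric.dense_iff]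
  intro p ε hε
  set v : Plane := y - x with hv
  have hvne : v ≠ 0 := sub_ne_zero.mpr (Ne.symm hxy)
  have hvnorm : (0:ℝ) < ‖v‖ := norm_pos_iff.mpr hvne
  -- g t := dist(p+t•v, x)^2 - dist(p+t•v,y)^2 = g 0 + 2 t ‖v‖^2
  have key : ∀ t : ℝ, dist (p + t • v) x ^ 2 - dist (p + t • v) y ^ 2 =
      (dist p x ^ 2 - dist p y ^ 2) + 2 * t * ‖v‖ ^ 2 := by
    intro t
    rw [sq_dist_line, sq_dist_line]
    have hinner : ⟪p - x, v⟫ - ⟪p - y, v⟫ = ‖v‖ ^ 2 := by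
      rw [← inner_sub_left]
      have : p - x - (p - y) = v := by rw [hv]; abel
      rw [this, real_inner_self_eq_norm_sq]
    linear_combination 2 * t * hinner
  set t₁ : ℝ := ε / (2 * ‖v‖) with ht₁
  set t₂ : ℝ := ε / (4 * ‖v‖) with ht₂
  have ht₁pos : 0 < t₁ := div_pos hε (by positivity)
  have ht₂pos : 0 < t₂ := div_pos hε (by positivity)
  have ht12 : t₂ < t₁ := by
    rw [ht₁, ht₂]
    exact div_lt_div_of_pos_left hε (by positivity) (by nlinarith)
  have hlt : ∀ t : ℝ, 0 < t → t ≤ t₁ → p + t • v ∈ Metric.ball p ε := by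
    intro t ht htle
    simp only [Metric.mem_ball, dist_self_add_left, norm_smul, Real.norm_eq_abs,
      abs_of_pos ht]
    calc t * ‖v‖ ≤ t₁ * ‖v‖ := by nlinarith
      _ = ε / 2 := by field_simp [ht₁]; rw [ht₁]; field_simp
      _ < ε := by linarith
  have hd : ∃ t : ℝ, 0 < t ∧ t ≤ t₁ ∧ dist (p + t • v) x ≠ dist (p + t • v) y := by
    by_contra h
    push_neg at h
    have h1 := h t₁ ht₁pos le_rfl
    have h2 := h t₂ ht₂pos ht12.le
    have k1 := key t₁
    have k2 := key t₂
    rw [h1, sub_self] at k1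
    rw [h2, sub_self] at k2
    have hv2 : (0:ℝ) < ‖v‖ ^ 2 := by positivity
    nlinarith [k1, k2, ht12]
  obtain ⟨t, ht, htle, hne⟩ := hd
  exact ⟨p + t • v, hlt t ht htle, hne⟩

/-- for any injective embedding of the candidates and any candidate `c`,
there is a linear order ranking `c` first whose region is nonempty. -/
theorem stmt_13 {C : Type*} [Fintype C] (γ : C → Plane) (hγ : Function.Injective γ)
    (c : C) :
    ∃ σ : C ≃ Fin (Fintype.card C),
      (∀ d : C, d ≠ c → σ c < σ d) ∧ (region γ σ).Nonempty := by
  classical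
  -- Dense set of points with pairwise distinct distances to the candidates
  set G : C × C → Set Plane := fun ab =>
    if ab.1 = ab.2 then Set.univ else {p | dist p (γ ab.1) ≠ dist p (γ ab.2)} with hG
  have hGopen : ∀ ab, IsOpen (G ab) := by
    intro ab
    rw [hG]
    dsimp only
    split_ifs with h
    · exact isOpen_univ
    · exact isOpen_ne_fun (Continuous.dist continuous_id continuous_const)
        (Continuous.dist continuous_id continuous_const)
  have hGdense : ∀ ab, Dense (G ab) := by
    intro ab
    rw [hG]
    dsimp only
    split_ifs with h
    · exact dense_univ
    · exact dense_ne_bisector _ _ (fun hc => h (hγ hc))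
  have hD : Dense (⋂ ab, G ab) := dense_iInter_of_isOpen hGopen hGdense
  -- open nonempty set of points closer to c than to all others
  set U : Set Plane := ⋂ d ∈ (Finset.univ.erase c), {p | dist p (γ c) < dist p (γ d)}
    with hU
  have hUopen : IsOpen U := by
    apply isOpen_biInter_finset
    intro d _
    exact isOpen_lt (Continuous.dist continuous_id continuous_const)
      (Continuous.dist continuous_id continuous_const)
  have hUne : (γ c) ∈ U := by
    rw [hU]
    simp only [Set.mem_iInter, Set.mem_setOf_eq, Finset.mem_erase]
    intro d hd
    rw [dist_self]
    exact dist_pos.mpr fun h => hd.1 (hγ h).symm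
  obtain ⟨p, hpD, hpU⟩ := hD.exists_mem_open hUopen ⟨γ c, hUne⟩
  -- hpU : p ∈ U, hpD : p ∈ ⋂ G
  -- distances from p are pairwise distinct
  have hinj : Function.Injective (fun a : C => dist p (γ a)) := by
    intro a b hab
    by_contra hne
    have hmem := Set.mem_iInter.mp hpD ((a, b) : C × C)
    simp only [hG, if_neg hne, Set.mem_setOf_eq] at hmem
    exact hmem hab
  have hfirst : ∀ d : C, d ≠ c → dist p (γ c) < dist p (γ d) := by
    intro d hd
    have h := hpU
    rw [hU, Set.mem_iInter₂] at h
    exact h d (Finset.mem_erase.mpr ⟨hd, Finset.mem_univ d⟩)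
  -- build the linear order from distances to p
  letI : LinearOrder C := LinearOrder.lift' (fun a : C => dist p (γ a)) hinj
  have hlt : ∀ a b : C, a < b ↔ dist p (γ a) < dist p (γ b) := by
    intro a b
    rw [lt_iff_le_not_ge, lt_iff_le_not_ge]
    exact Iff.rfl
  let e : C ≃o Fin (Fintype.card C) := (monoEquivOfFin C rfl).symm
  refine ⟨e.toEquiv, ?_, p, ?_⟩
  · intro d hd
    have : c < d := (hlt c d).mpr (hfirst d hd)
    exact e.lt_iff_lt.mpr this
  · intro a b hab
    exact (hlt a b).mp (e.lt_iff_lt.mp hab)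
end
end

section
/- Let γ : C → ℝ² be an embedding of a candidate set of size m ≥ 2, and let a,b ∈ C be distinct. Then the perpendicular bisector of γ(a) and γ(b) intersects at most C(m−2,2) + m − 1 regions of the arrangement formed by all other bisectors. -/
noncomputable section

/- ### Auxiliary algebraic lemmas -/

lemma expand_aff (P v c d : Plane) (t : ℝ) :
    ‖P + t • v - c‖^2 - ‖P + t • v - d‖^2
      = (‖P - c‖^2 - ‖P - d‖^2) + t * (2 * (inner ℝ v (d - c) : ℝ)) := by
  have h1 : P + t • v - c = (P - c) + t • v := by abel
  have h2 : P + t • v - d = (P - d) + t • v := by abel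
  rw [h1, h2, norm_add_sq_real, norm_add_sq_real]
  simp [real_inner_smul_right, inner_sub_left, inner_sub_right]
  rw [real_inner_comm v c, real_inner_comm v d]
  ring

lemma aff_root {α β s₁ s₂ : ℝ} (h1 : α + s₁ * β < 0) (h2 : 0 < α + s₂ * β) (h12 : s₁ < s₂) :
    ∃ t, s₁ < t ∧ t < s₂ ∧ α + t * β = 0 := by
  have hβ : 0 < β := by nlinarith
  refine ⟨-α / β, ?_, ?_, ?_⟩
  · rw [lt_div_iff₀ hβ]; nlinarith
  · rw [div_lt_iff₀ hβ]; nlinarith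
  · field_simp; ring

lemma aff_two_roots {α β t₁ t₂ : ℝ} (h1 : α + t₁ * β = 0) (h2 : α + t₂ * β = 0) (h : t₁ ≠ t₂)
    (s : ℝ) : α + s * β = 0 := by
  have hβ : β = 0 := by
    by_contra hβ
    apply h
    have : (t₁ - t₂) * β = 0 := by linarith
    rcases mul_eq_zero.mp this with h' | h'
    · linarith
    · exact absurd h' hβ
  subst hβ
  simpa using h1

lemma aff_neg {α β t : ℝ} (h1 : α < 0) (h2 : α + β < 0) (ht0 : 0 ≤ t) (ht1 : t ≤ 1) :
    α + t * β < 0 := by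
  rcases eq_or_lt_of_le ht0 with h | h
  · subst h; simpa using h1
  · have e1 : t * (α + β) < 0 := mul_neg_of_pos_of_neg h h2
    have e2 : (1 - t) * α ≤ 0 := mul_nonpos_of_nonneg_of_nonpos (by linarith) h1.le
    nlinarith

/- ### Counting lemma -/

lemma count_lemma (T R : Finset ℝ)
    (h : ∀ x ∈ T, ∀ y ∈ T, x < y → ∃ r ∈ R, x < r ∧ r < y) :
    T.card ≤ R.card + 1 := by
  induction R using Finset.strongInduction generalizing T with
  | _ R ih =>
    rcases le_or_gt T.card 1 with hT | hT
    · omega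
    · have hTne : T.Nonempty := Finset.card_pos.mp (by omega)
      set x := T.min' hTne with hx
      set T' := T.erase x with hT'
      have hxT : x ∈ T := T.min'_mem hTne
      have hT'card : T'.card = T.card - 1 := Finset.card_erase_of_mem hxT
      have hT'ne : T'.Nonempty := Finset.card_pos.mp (by omega)
      set y := T'.min' hT'ne with hy
      have hyT' : y ∈ T' := T'.min'_mem hT'ne
      have hyT : y ∈ T := Finset.mem_of_mem_erase hyT'
      have hxy : x < y := lt_of_le_of_ne (T.min'_le y hyT) (Finset.ne_of_mem_erase hyT').symm
      obtain ⟨r, hrR, hxr, hry⟩ := h x hxT y hyT hxy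
      have hsub : R.erase r ⊂ R := Finset.erase_ssubset hrR
      have := ih (R.erase r) hsub T' ?_
      · have hre : (R.erase r).card = R.card - 1 := Finset.card_erase_of_mem hrR
        have hRpos : 0 < R.card := Finset.card_pos.mpr ⟨r, hrR⟩
        omega
      · intro x' hx' y' hy' hlt
        obtain ⟨r', hr'R, h1, h2⟩ :=
          h x' (Finset.mem_of_mem_erase hx') y' (Finset.mem_of_mem_erase hy') hlt
        refine ⟨r', Finset.mem_erase.mpr ⟨?_, hr'R⟩, h1, h2⟩
        have hyx' : y ≤ x' := T'.min'_le x' hx'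
        exact ne_of_gt (lt_trans (lt_of_lt_of_le hry hyx') h1)

/- ### An equiv to `Fin m` is determined by its order -/

lemma order_det {C : Type*} {m : ℕ} (u₁ u₂ : C ≃ Fin m)
    (h : ∀ c d : C, u₁ c < u₁ d → u₂ c < u₂ d) : u₁ = u₂ := by
  have hsm : StrictMono (fun i => u₂ (u₁.symm i)) := by
    intro i j hij
    apply h
    simpa using hij
  have hr : Set.range (fun i => u₂ (u₁.symm i)) = Set.range (id : Fin m → Fin m) := by
    rw [Set.range_id, Set.range_eq_univ]
    exact (u₁.symm.trans u₂).surjective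
  have hid : StrictMono (id : Fin m → Fin m) := strictMono_id
  haveI : WellFoundedLT (Fin m) := inferInstance
  have heq : (fun i => u₂ (u₁.symm i)) = (id : Fin m → Fin m) :=
    Set.range_injOn_strictMono hsm hid hr
  ext c
  have := congrFun heq (u₁ c)
  simp only [Equiv.symm_apply_apply, id_eq] at this
  exact congrArg _ this.symm

/- ### Geometry: parametrizing the perpendicular bisector -/

def perp (w : Plane) : Plane := (WithLp.equiv 2 (Fin 2 → ℝ)).symm ![-(w 1), w 0]

lemma perp_apply0 (w : Plane) : perp w 0 = -(w 1) := rfl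
lemma perp_apply1 (w : Plane) : perp w 1 = w 0 := rfl

lemma inner_coords (x y : Plane) : (inner ℝ x y : ℝ) = x 0 * y 0 + x 1 * y 1 := by
  simp [PiLp.inner_apply, Fin.sum_univ_two, RCLike.inner_apply]
  ring

lemma perp_inner (w : Plane) : (inner ℝ (perp w) w : ℝ) = 0 := by
  rw [inner_coords, perp_apply0, perp_apply1]; ring

lemma inner_ortho (a' b' r : Plane) (h : ‖r - a'‖^2 = ‖r - b'‖^2) :
    (inner ℝ (r - (2⁻¹:ℝ) • (a' + b')) (b' - a') : ℝ) = 0 := by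
  have e1 : ‖r - a'‖^2 = ‖r‖^2 - 2 * inner ℝ r a' + ‖a'‖^2 := norm_sub_sq_real r a'
  have e2 : ‖r - b'‖^2 = ‖r‖^2 - 2 * inner ℝ r b' + ‖b'‖^2 := norm_sub_sq_real r b'
  have na : (inner ℝ a' a' : ℝ) = ‖a'‖^2 := real_inner_self_eq_norm_sq a'
  have nb : (inner ℝ b' b' : ℝ) = ‖b'‖^2 := real_inner_self_eq_norm_sq b'
  have hc : (inner ℝ a' b' : ℝ) = inner ℝ b' a' := real_inner_comm b' a'
  have hra : (inner ℝ r a' : ℝ) = inner ℝ a' r := real_inner_comm a' r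
  have hrb : (inner ℝ r b' : ℝ) = inner ℝ b' r := real_inner_comm b' r
  simp only [inner_sub_left, inner_sub_right, inner_add_left, inner_add_right,
    real_inner_smul_left]
  linarith [h, e1, e2]

lemma w_coords_ne (w : Plane) (hw : w ≠ 0) : w 0 ≠ 0 ∨ w 1 ≠ 0 := by
  by_contra hcon
  push_neg at hcon
  exact hw (PiLp.ext (fun i => by fin_cases i <;> simp [hcon.1, hcon.2]))

lemma bisect_param (a' b' r : Plane) (hne : a' ≠ b') (h : ‖r - a'‖^2 = ‖r - b'‖^2) :
    ∃ t : ℝ, r = (2⁻¹:ℝ) • (a' + b') + t • perp (b' - a') := by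
  set A : Plane := (2⁻¹:ℝ) • (a' + b') with hA
  set w : Plane := b' - a' with hwdef
  have hw : w ≠ 0 := sub_ne_zero.mpr (Ne.symm hne)
  have h0 : (inner ℝ (r - A) w : ℝ) = 0 := inner_ortho a' b' r h
  have hc : (r 0 - A 0) * w 0 + (r 1 - A 1) * w 1 = 0 := by
    have := inner_coords (r - A) w
    rw [h0] at this
    simp only [PiLp.sub_apply] at this
    linarith
  rcases w_coords_ne w hw with h0' | h1'
  · refine ⟨(r 1 - A 1) / w 0, PiLp.ext (fun i => ?_)⟩
    fin_cases i <;>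
      simp only [PiLp.add_apply, PiLp.smul_apply, smul_eq_mul, perp,
        WithLp.equiv_symm_apply, PiLp.toLp_apply, Fin.mk_zero, Fin.mk_one, Fin.isValue,
        Matrix.cons_val_zero, Matrix.cons_val_one, Matrix.head_cons]
    · field_simp
      nlinarith [hc]
    · field_simp
      ring
  · refine ⟨-(r 0 - A 0) / w 1, PiLp.ext (fun i => ?_)⟩
    fin_cases i <;>
      simp only [PiLp.add_apply, PiLp.smul_apply, smul_eq_mul, perp,
        WithLp.equiv_symm_apply, PiLp.toLp_apply, Fin.mk_zero, Fin.mk_one, Fin.isValue,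
        Matrix.cons_val_zero, Matrix.cons_val_one, Matrix.head_cons]
    · field_simp
      ring
    · field_simp
      nlinarith [hc]

lemma on_line (a' b' : Plane) (t : ℝ) :
    ‖(2⁻¹:ℝ) • (a' + b') + t • perp (b' - a') - a'‖^2
      = ‖(2⁻¹:ℝ) • (a' + b') + t • perp (b' - a') - b'‖^2 := by
  have h := expand_aff ((2⁻¹:ℝ) • (a' + b')) (perp (b' - a')) a' b' t
  have h1 : (2⁻¹:ℝ) • (a' + b') - a' = (2⁻¹:ℝ) • (b' - a') := by
    rw [smul_sub, smul_add]; module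
  have h2 : (2⁻¹:ℝ) • (a' + b') - b' = -((2⁻¹:ℝ) • (b' - a')) := by
    rw [smul_sub, smul_add]; module
  have h3 : ‖(2⁻¹:ℝ) • (a' + b') - a'‖ = ‖(2⁻¹:ℝ) • (a' + b') - b'‖ := by
    rw [h1, h2, norm_neg]
  rw [perp_inner] at h
  have h4 : ‖(2⁻¹:ℝ) • (a' + b') - a'‖^2 = ‖(2⁻¹:ℝ) • (a' + b') - b'‖^2 := by rw [h3]
  linarith [h, h4]

/- ### Order lemma for the swap -/

lemma swap_order {C : Type*} [DecidableEq C] {m : ℕ} (u : C ≃ Fin m) {a b : C}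
    (hu : (u a : ℕ) + 1 = (u b : ℕ)) {c d : C} (hcd : u c < u d) (hne : ¬(c = a ∧ d = b)) :
    ((Equiv.swap a b).trans u) c < ((Equiv.swap a b).trans u) d := by
  have hinj : ∀ x y : C, x ≠ y → (u x : ℕ) ≠ (u y : ℕ) :=
    fun x y h h' => h (u.injective (Fin.ext h'))
  have hcd' : c ≠ d := fun h => lt_irrefl _ (h ▸ hcd)
  rw [Fin.lt_def] at hcd ⊢
  simp only [Equiv.trans_apply]
  by_cases hca : c = a
  · have hdb' : d ≠ b := fun h => hne ⟨hca, h⟩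
    have hda : d ≠ a := fun h => hcd' (hca.trans h.symm)
    rw [hca, Equiv.swap_apply_left, Equiv.swap_apply_of_ne_of_ne hda hdb']
    rw [hca] at hcd
    have h1 := hinj b d (Ne.symm hdb')
    omega
  · by_cases hcb : c = b
    · rw [hcb, Equiv.swap_apply_right]
      rw [hcb] at hcd
      by_cases hda : d = a
      · rw [hda, Equiv.swap_apply_left]
        omega
      · by_cases hdb : d = b
        · exact absurd hdb.symm (hcb ▸ hcd')
        · rw [Equiv.swap_apply_of_ne_of_ne hda hdb]
          omega
    · rw [Equiv.swap_apply_of_ne_of_ne hca hcb]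
      by_cases hda : d = a
      · rw [hda, Equiv.swap_apply_left]
        rw [hda] at hcd
        omega
      · by_cases hdb : d = b
        · rw [hdb, Equiv.swap_apply_right]
          rw [hdb] at hcd
          have h1 := hinj c a hca
          omega
        · rw [Equiv.swap_apply_of_ne_of_ne hda hdb]
          exact hcd

/- ### Main theorem -/

/-- the bisector of `γ a` and `γ b` crosses at most `C(m−2,2) + m − 1`
regions of the arrangement of the remaining bisectors. Equivalently (each crossed cell of
the remaining arrangement is split into the two regions of a pair of orders differing
only by swapping the consecutive candidates `a,b`): the number of orders `u` ranking `a`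
immediately before `b` such that both the region of `u` and the region of `u` with `a,b`
swapped are nonempty is at most `C(m−2,2) + m − 1`. -/
theorem stmt_16 {C : Type*} [Fintype C] [DecidableEq C] (γ : C → Plane) (hγ : Function.Injective γ)
    (hm : 2 ≤ Fintype.card C) (a b : C) (hab : a ≠ b) :
    Set.ncard {u : C ≃ Fin (Fintype.card C) |
        ((u a : ℕ) + 1 = (u b : ℕ)) ∧ (region γ u).Nonempty ∧
        (region γ ((Equiv.swap a b).trans u)).Nonempty} ≤
      Nat.choose (Fintype.card C - 2) 2 + Fintype.card C - 1 := by
  classical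
  set m := Fintype.card C with hmdef
  set S : Set (C ≃ Fin m) := {u : C ≃ Fin m |
      ((u a : ℕ) + 1 = (u b : ℕ)) ∧ (region γ u).Nonempty ∧
      (region γ ((Equiv.swap a b).trans u)).Nonempty} with hS
  set a' : Plane := γ a with ha'
  set b' : Plane := γ b with hb'
  have hne : a' ≠ b' := fun h => hab (hγ h)
  set A : Plane := (2⁻¹:ℝ) • (a' + b') with hA
  set v : Plane := perp (b' - a') with hv
  set g : C → C → ℝ → ℝ :=
    fun c d t => ‖A + t • v - γ c‖^2 - ‖A + t • v - γ d‖^2 with hgdef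
  have g_aff : ∀ c d t, g c d t
      = (‖A - γ c‖^2 - ‖A - γ d‖^2) + t * (2 * (inner ℝ v (γ d - γ c) : ℝ)) :=
    fun c d t => expand_aff A v (γ c) (γ d) t
  have g_anti : ∀ c d t, g d c t = - g c d t := by
    intro c d t
    simp only [hgdef]
    ring
  have g_self : ∀ c t, g c c t = 0 := by
    intro c t
    simp only [hgdef]
    ring
  have g_ab : ∀ t, g a b t = 0 := by
    intro t
    simp only [hgdef, ← ha', ← hb', hA, hv]
    have := on_line a' b' t
    linarith
  -- replacing `b` by `a` in either slot does not change `g`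
  have g_bfst : ∀ c t, g b c t = g a c t := by
    intro c t
    have h1 := g_ab t
    simp only [hgdef] at h1 ⊢
    linarith
  have g_bsnd : ∀ c t, g c b t = g c a t := by
    intro c t
    have h1 := g_ab t
    simp only [hgdef] at h1 ⊢
    linarith
  -- squared distance comparison
  have sqlt : ∀ (x y z : Plane), dist x y < dist x z → ‖x - y‖^2 < ‖x - z‖^2 := by
    intro x y z h
    rw [dist_eq_norm, dist_eq_norm] at h
    exact pow_lt_pow_left₀ h (norm_nonneg _) (by norm_num)
  -- for every u in S, produce a parameter s on the bisector line
  have key : ∀ u : C ≃ Fin m, u ∈ S →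
      ∃ s : ℝ, ∀ c d : C, u c < u d → ¬(c = a ∧ d = b) → g c d s < 0 := by
    intro u hu
    obtain ⟨hu1, ⟨p, hp⟩, ⟨q, hq⟩⟩ := hu
    have huab : u a < u b := by rw [Fin.lt_def]; omega
    -- the affine function along the segment from p to q for the pair (a, b)
    have hpa : ‖p - a'‖^2 - ‖p - b'‖^2 < 0 := by
      have := sqlt p a' b' (hp a b huab)
      linarith
    have hqa : 0 < ‖q - a'‖^2 - ‖q - b'‖^2 := by
      have hswap : ((Equiv.swap a b).trans u) b < ((Equiv.swap a b).trans u) a := by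
        simp only [Equiv.trans_apply, Equiv.swap_apply_left, Equiv.swap_apply_right]
        rw [Fin.lt_def]; omega
      have := sqlt q b' a' (hq b a hswap)
      linarith
    have hq1 : p + (1:ℝ) • (q - p) = q := by module
    have h2' : 0 < (‖p - a'‖^2 - ‖p - b'‖^2)
        + 1 * (2 * (inner ℝ (q - p) (b' - a') : ℝ)) := by
      have := expand_aff p (q - p) a' b' 1
      rw [hq1] at this
      linarith
    have h1' : (‖p - a'‖^2 - ‖p - b'‖^2)
        + 0 * (2 * (inner ℝ (q - p) (b' - a') : ℝ)) < 0 := by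
      simpa using hpa
    obtain ⟨t₀, ht0, ht1, hroot⟩ := aff_root h1' h2' one_pos
    set r : Plane := p + t₀ • (q - p) with hr
    have hrab : ‖r - a'‖^2 = ‖r - b'‖^2 := by
      have := expand_aff p (q - p) a' b' t₀
      simp only [← hr] at this
      linarith
    obtain ⟨s, hs⟩ := bisect_param a' b' r hne hrab
    refine ⟨s, fun c d hcd hne' => ?_⟩
    have hswap := swap_order u hu1 hcd hne'
    have hp' := sqlt p (γ c) (γ d) (hp c d hcd)
    have hq' := sqlt q (γ c) (γ d) (hq c d hswap)
    have ec := expand_aff p (q - p) (γ c) (γ d) t₀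
    have h0 : ‖p - γ c‖^2 - ‖p - γ d‖^2 < 0 := by linarith
    have h1'' : (‖p - γ c‖^2 - ‖p - γ d‖^2)
        + 2 * (inner ℝ (q - p) (γ d - γ c) : ℝ) < 0 := by
      have e1 := expand_aff p (q - p) (γ c) (γ d) 1
      rw [hq1] at e1
      have : (1:ℝ) * (2 * (inner ℝ (q - p) (γ d - γ c) : ℝ))
          = 2 * (inner ℝ (q - p) (γ d - γ c) : ℝ) := by ring
      rw [this] at e1
      linarith
    have hneg := aff_neg h0 h1'' ht0.le ht1.le
    have hrval : ‖r - γ c‖^2 - ‖r - γ d‖^2 < 0 := by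
      simp only [← hr] at ec
      linarith
    have : g c d s = ‖r - γ c‖^2 - ‖r - γ d‖^2 := by
      simp only [hgdef, hA, hv, ← hs]
    linarith
  -- choose the parameter for each u
  set sfun : (C ≃ Fin m) → ℝ := fun u => if h : u ∈ S then (key u h).choose else 0
    with hsfun
  have sfun_spec : ∀ u (h : u ∈ S), ∀ c d : C, u c < u d → ¬(c = a ∧ d = b) →
      g c d (sfun u) < 0 := by
    intro u h c d h1 h2
    simp only [hsfun, dif_pos h]
    exact (key u h).choose_spec c d h1 h2
  -- injectivity on S
  have inj : ∀ u₁ ∈ S, ∀ u₂ ∈ S, sfun u₁ = sfun u₂ → u₁ = u₂ := by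
    intro u₁ h₁ u₂ h₂ hss
    apply order_det
    intro c d hcd
    by_cases hcase : c = a ∧ d = b
    · obtain ⟨rfl, rfl⟩ := hcase
      obtain ⟨hu2, -, -⟩ := h₂
      rw [Fin.lt_def]
      omega
    · have hg1 : g c d (sfun u₁) < 0 := sfun_spec u₁ h₁ c d hcd hcase
      rcases lt_trichotomy (u₂ c) (u₂ d) with h | h | h
      · exact h
      · exact absurd (u₂.injective (Fin.ext (congrArg Fin.val h)))
          (fun he => lt_irrefl _ (he ▸ hcd))
      · exfalso
        have hne2 : ¬(d = a ∧ c = b) := by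
          rintro ⟨rfl, rfl⟩
          obtain ⟨hu1, -, -⟩ := h₁
          rw [Fin.lt_def] at hcd
          omega
        have hg2 : g d c (sfun u₂) < 0 := sfun_spec u₂ h₂ d c h hne2
        rw [hss] at hg1
        rw [g_anti] at hg2
        linarith
  -- the index set of canonical pairs and the root sets
  set I : Finset (Finset C) := (Finset.univ.erase b).powersetCard 2 with hI
  set Zset : Finset C → Set ℝ := fun p =>
    {t | (∀ c ∈ p, ∀ d ∈ p, g c d t = 0) ∧ ∃ c ∈ p, ∃ d ∈ p, ∃ s', g c d s' ≠ 0} with hZ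
  have Zsub : ∀ p ∈ I, ∀ t₁ ∈ Zset p, ∀ t₂ ∈ Zset p, t₁ = t₂ := by
    intro p hp t₁ ht₁ t₂ ht₂
    by_contra hne12
    obtain ⟨hsub, hcard⟩ := Finset.mem_powersetCard.mp hp
    obtain ⟨c, d, hcd, rfl⟩ := Finset.card_eq_two.mp hcard
    obtain ⟨hz1, x, hx, y, hy, s', hs'⟩ := ht₁
    obtain ⟨hz2, -⟩ := ht₂
    have hxy : x ≠ y := by
      rintro rfl
      exact hs' (g_self x s')
    have hr1 : g x y t₁ = 0 := hz1 x hx y hy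
    have hr2 : g x y t₂ = 0 := hz2 x hx y hy
    rw [g_aff] at hr1 hr2
    have := aff_two_roots hr1 hr2 hne12 s'
    rw [← g_aff] at this
    exact hs' this
  set pick : Finset C → Finset ℝ := fun p =>
    if h : (Zset p).Nonempty then {h.choose} else ∅ with hpick
  have pick_mem : ∀ p ∈ I, ∀ t ∈ Zset p, t ∈ pick p := by
    intro p hp t ht
    have hnem : (Zset p).Nonempty := ⟨t, ht⟩
    simp only [hpick, dif_pos hnem, Finset.mem_singleton]
    exact Zsub p hp t ht hnem.choose hnem.choose_spec
  set R : Finset ℝ := I.biUnion pick with hR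
  have hRcard : R.card ≤ I.card := by
    calc R.card ≤ ∑ p ∈ I, (pick p).card := Finset.card_biUnion_le
    _ ≤ ∑ p ∈ I, 1 := Finset.sum_le_sum (fun p _ => by
        simp only [hpick]
        split <;> simp)
    _ = I.card := by simp
  -- the finite set of parameters
  have hSfin : S.Finite := Set.toFinite S
  set T : Finset ℝ := hSfin.toFinset.image sfun with hT
  have hTcard : T.card = S.ncard := by
    rw [hT, Finset.card_image_of_injOn (fun u₁ h₁ u₂ h₂ he =>
      inj u₁ (hSfin.mem_toFinset.mp h₁) u₂ (hSfin.mem_toFinset.mp h₂) he)]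
    exact (Set.ncard_eq_toFinset_card S hSfin).symm
  -- between any two elements of T there is an element of R
  have hbetween : ∀ x ∈ T, ∀ y ∈ T, x < y → ∃ r ∈ R, x < r ∧ r < y := by
    intro x hx y hy hxy
    obtain ⟨u₁, hu₁, rfl⟩ := Finset.mem_image.mp hx
    obtain ⟨u₂, hu₂, rfl⟩ := Finset.mem_image.mp hy
    have hu₁S : u₁ ∈ S := hSfin.mem_toFinset.mp hu₁
    have hu₂S : u₂ ∈ S := hSfin.mem_toFinset.mp hu₂
    have hne12 : u₁ ≠ u₂ := fun h => absurd (h ▸ hxy) (lt_irrefl _)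
    -- find a flipped pair
    have hflip : ∃ c d : C, u₁ c < u₁ d ∧ u₂ d < u₂ c := by
      by_contra hcon
      push_neg at hcon
      apply hne12
      apply order_det
      intro c d hcd
      have := hcon c d hcd
      rcases lt_trichotomy (u₂ c) (u₂ d) with h | h | h
      · exact h
      · exact absurd (u₂.injective (Fin.ext (congrArg Fin.val h)))
          (fun he => lt_irrefl _ (he ▸ hcd))
      · exact absurd h (not_lt.mpr this)
    obtain ⟨c, d, hcd1, hcd2⟩ := hflip
    have hcdne : c ≠ d := fun h => lt_irrefl _ (h ▸ hcd1)
    have hnab : ¬(c = a ∧ d = b) := by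
      rintro ⟨rfl, rfl⟩
      obtain ⟨hu2, -, -⟩ := hu₂S
      rw [Fin.lt_def] at hcd2
      omega
    have hnba : ¬(d = a ∧ c = b) := by
      rintro ⟨rfl, rfl⟩
      obtain ⟨hu1, -, -⟩ := hu₁S
      rw [Fin.lt_def] at hcd1
      omega
    have hg1 : g c d (sfun u₁) < 0 := sfun_spec u₁ hu₁S c d hcd1 hnab
    have hg2 : g d c (sfun u₂) < 0 := sfun_spec u₂ hu₂S d c hcd2 hnba
    have hg2' : 0 < g c d (sfun u₂) := by rw [g_anti] at hg2; linarith
    -- canonicalize the pair to avoid b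
    set c' : C := if c = b then a else c with hc'
    set d' : C := if d = b then a else d with hd'
    have hgc : ∀ t, g c' d' t = g c d t := by
      intro t
      rw [hc', hd']
      split_ifs with h1 h2 h2
      · exact absurd (h1.trans h2.symm) hcdne
      · subst h1; rw [g_bfst]
      · subst h2; rw [g_bsnd]
      · rfl
    have hc'b : c' ≠ b := by
      rw [hc']; split_ifs with h
      · exact hab
      · exact h
    have hd'b : d' ≠ b := by
      rw [hd']; split_ifs with h
      · exact hab
      · exact h
    have hc'd' : c' ≠ d' := by
      rw [hc', hd']; split_ifs with h1 h2 h2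
      · exact absurd (h1.trans h2.symm) hcdne
      · subst h1
        intro he
        exact hnba ⟨he.symm, rfl⟩
      · subst h2
        intro he
        exact hnab ⟨he, rfl⟩
      · exact hcdne
    -- the root
    have hg1' : g c' d' (sfun u₁) < 0 := by rw [hgc]; exact hg1
    have hg2'' : 0 < g c' d' (sfun u₂) := by rw [hgc]; exact hg2'
    rw [g_aff] at hg1' hg2''
    obtain ⟨t₀, hlt1, hlt2, hroot⟩ := aff_root hg1' hg2'' hxy
    refine ⟨t₀, ?_, hlt1, hlt2⟩
    have hpI : ({c', d'} : Finset C) ∈ I := by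
      rw [hI, Finset.mem_powersetCard]
      constructor
      · intro x hx
        rcases Finset.mem_insert.mp hx with rfl | hx
        · exact Finset.mem_erase.mpr ⟨hc'b, Finset.mem_univ _⟩
        · rw [Finset.mem_singleton] at hx
          subst hx
          exact Finset.mem_erase.mpr ⟨hd'b, Finset.mem_univ _⟩
      · exact Finset.card_pair hc'd'
    have ht₀Z : t₀ ∈ Zset ({c', d'} : Finset C) := by
      rw [← g_aff] at hroot
      constructor
      · intro x hx y hy
        rcases Finset.mem_insert.mp hx with rfl | hx <;>
          rcases Finset.mem_insert.mp hy with rfl | hy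
        · exact g_self _ t₀
        · rw [Finset.mem_singleton] at hy; subst hy; exact hroot
        · rw [Finset.mem_singleton] at hx; subst hx
          rw [g_anti, hroot, neg_zero]
        · rw [Finset.mem_singleton] at hx hy; subst hx; subst hy
          exact g_self _ t₀
      · refine ⟨c', Finset.mem_insert_self _ _, d',
          Finset.mem_insert_of_mem (Finset.mem_singleton_self _), sfun u₁, ?_⟩
        rw [← g_aff] at hg1'
        exact ne_of_lt hg1'
    exact Finset.mem_biUnion.mpr ⟨{c', d'}, hpI, pick_mem _ hpI t₀ ht₀Z⟩
  -- conclusion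
  have hmain : T.card ≤ R.card + 1 := count_lemma T R hbetween
  have hIcard : I.card = Nat.choose (m - 1) 2 := by
    rw [hI, Finset.card_powersetCard, Finset.card_erase_of_mem (Finset.mem_univ b),
      Finset.card_univ]
  have harith : Nat.choose (m - 1) 2 + 1 ≤ Nat.choose (m - 2) 2 + m - 1 := by
    have h2 : m - 1 = (m - 2) + 1 := by omega
    have h3 : Nat.choose ((m - 2) + 1) 2 = Nat.choose (m - 2) 1 + Nat.choose (m - 2) 2 :=
      Nat.choose_succ_succ _ 1
    rw [h2, h3, Nat.choose_one_right]
    omega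
  calc S.ncard = T.card := hTcard.symm
  _ ≤ R.card + 1 := hmain
  _ ≤ I.card + 1 := by omega
  _ = Nat.choose (m - 1) 2 + 1 := by omega
  _ ≤ Nat.choose (m - 2) 2 + m - 1 := harith
end
end
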